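/- arXiv:0911.3915 — 4 statements merged into one kernel-verified Lean document; each statement's English description precedes it below -/
import Mathlib

section
/- Let V be a finite-dimensional vector space over ℚ with a bilinear form Φ, and A, B, C subspaces on which Φ vanishes identically. Define W = (A ∩ (B + C)) / (A ∩ B + A ∩ C). For classes [a], [a'] ∈ W represented by a, a' ∈ A ∩ (B + C), writing a = -b - c and a' = -b' - c' with b, b' ∈ B and c, c' ∈ C, the assignment Ψ([a],[a']) := Φ(a, b') is a well-defined bilinear form on W, independent of the choices of representatives a, a' and of the decompositions into b, b', c, c'. -/
lemma wall_exists_proj {V : Type} [AddCommGroup V] [Module ℚ V]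
    (B C : Submodule ℚ V) :
    ∃ π : V →ₗ[ℚ] V, ∀ x ∈ B ⊔ C, π x ∈ B ∧ x - π x ∈ C := by
  obtain ⟨D₀, hD₀⟩ := Submodule.exists_isCompl ((B ⊓ C).comap B.subtype)
  set D' := D₀.map B.subtype with hD'def
  have hD'B : D' ≤ B := by
    rintro x ⟨⟨y, hy⟩, _, rfl⟩; exact hy
  have hsup : B ≤ D' ⊔ C := by
    intro x hx
    have : (⟨x, hx⟩ : B) ∈ D₀ ⊔ ((B ⊓ C).comap B.subtype) := by
      rw [sup_comm, hD₀.sup_eq_top]; trivial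
    obtain ⟨d, hd, e, he, hde⟩ := Submodule.mem_sup.mp this
    refine Submodule.mem_sup.mpr ⟨d, Submodule.mem_map_of_mem hd, e, he.2, ?_⟩
    simpa using (congrArg B.subtype hde.symm).symm
  have hdisj : Disjoint D' C := by
    rw [disjoint_iff]
    ext x
    simp only [Submodule.mem_inf, Submodule.mem_bot]
    constructor
    · rintro ⟨⟨⟨y, hy⟩, hyD, rfl⟩, hxC⟩
      have : (⟨y, hy⟩ : B) ∈ D₀ ⊓ ((B ⊓ C).comap B.subtype) :=
        ⟨hyD, ⟨hy, hxC⟩⟩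
      rw [hD₀.symm.inf_eq_bot] at this
      simpa using congrArg B.subtype this
    · rintro rfl; exact ⟨Submodule.zero_mem _, Submodule.zero_mem _⟩
  obtain ⟨E, hE⟩ := Submodule.exists_isCompl (D' ⊔ C)
  set D := D' ⊔ E with hDdef
  have hDC : IsCompl D C := by
    constructor
    · rw [disjoint_iff]
      ext x
      simp only [Submodule.mem_inf, Submodule.mem_bot]
      constructor
      · rintro ⟨hxD, hxC⟩
        obtain ⟨d, hd, e, he, rfl⟩ := Submodule.mem_sup.mp hxD
        have heE : e ∈ (D' ⊔ C) ⊓ E := by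
          refine ⟨?_, he⟩
          have : e = (d + e) - d := by abel
          rw [this]
          exact Submodule.sub_mem _ (Submodule.mem_sup_right hxC)
            (Submodule.mem_sup_left hd)
        rw [hE.inf_eq_bot] at heE
        simp only [Submodule.mem_bot] at heE
        subst heE
        have : d + 0 ∈ D' ⊓ C := ⟨by simpa using hd, by simpa using hxC⟩
        rw [hdisj.eq_bot] at this
        simpa using this
      · rintro rfl; exact ⟨Submodule.zero_mem _, Submodule.zero_mem _⟩
    · rw [codisjoint_iff]
      have : D ⊔ C = (D' ⊔ C) ⊔ E := by
        rw [hDdef, sup_assoc, sup_comm E C, ← sup_assoc]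
      rw [this, hE.sup_eq_top]
  refine ⟨D.subtype ∘ₗ (D.projectionOnto C hDC), ?_⟩
  intro x hx
  have hx' : x ∈ D' ⊔ C := sup_le hsup le_sup_right hx
  obtain ⟨d, hd, c, hc, rfl⟩ := Submodule.mem_sup.mp hx'
  have hdD : d ∈ D := Submodule.mem_sup_left hd
  have : (D.projectionOnto C hDC) (d + c) = ⟨d, hdD⟩ := by
    rw [map_add, Submodule.projectionOnto_apply_left hDC ⟨d, hdD⟩,
      Submodule.projectionOnto_apply_right hDC ⟨c, hc⟩]
    simp
  constructor
  · simp only [LinearMap.comp_apply, this, Submodule.subtype_apply]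
    exact hD'B hd
  · simp only [LinearMap.comp_apply, this, Submodule.subtype_apply]
    simpa using hc

/-- Wall's pairing Ψ([a],[a']) = Φ(a,b') is a well-defined bilinear form on
W = (A ∩ (B + C)) / (A ∩ B + A ∩ C), independent of all choices of representatives and
decompositions. -/
theorem wall_pairing_well_defined {V : Type} [AddCommGroup V] [Module ℚ V]
    [FiniteDimensional ℚ V]
    (Φ : V →ₗ[ℚ] V →ₗ[ℚ] ℚ) (A B C : Submodule ℚ V)
    (hA : ∀ x ∈ A, ∀ y ∈ A, Φ x y = 0)
    (hB : ∀ x ∈ B, ∀ y ∈ B, Φ x y = 0)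
    (hC : ∀ x ∈ C, ∀ y ∈ C, Φ x y = 0) :
    ∃ Ψ : (↥(A ⊓ (B ⊔ C)) ⧸ (Submodule.comap (A ⊓ (B ⊔ C)).subtype (A ⊓ B ⊔ A ⊓ C)))
      →ₗ[ℚ] (↥(A ⊓ (B ⊔ C)) ⧸ (Submodule.comap (A ⊓ (B ⊔ C)).subtype (A ⊓ B ⊔ A ⊓ C)))
      →ₗ[ℚ] ℚ,
      ∀ (a a' b b' c c' : V) (_ : a ∈ A) (_ : a' ∈ A) (_ : b ∈ B) (_ : b' ∈ B)
        (_ : c ∈ C) (_ : c' ∈ C) (_ : a = -b - c) (_ : a' = -b' - c')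
        (hma : a ∈ A ⊓ (B ⊔ C)) (hma' : a' ∈ A ⊓ (B ⊔ C)),
        Ψ (Submodule.Quotient.mk ⟨a, hma⟩) (Submodule.Quotient.mk ⟨a', hma'⟩) = Φ a b' := by
  obtain ⟨π, hπ⟩ := wall_exists_proj B C
  set W := A ⊓ (B ⊔ C) with hWdef
  set N := Submodule.comap W.subtype (A ⊓ B ⊔ A ⊓ C) with hNdef
  -- the bilinear map F x y = -Φ x (π y) on W
  set F : ↥W →ₗ[ℚ] ↥W →ₗ[ℚ] ℚ :=
    -(Φ.compl₁₂ W.subtype (π ∘ₗ W.subtype)) with hFdef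
  have hFapply : ∀ x y : ↥W, F x y = -(Φ x (π y)) := by
    intro x y; simp [hFdef, LinearMap.compl₁₂_apply]
  -- key: Φ a d = 0 for a ∈ B ⊔ C, d ∈ B ⊓ C
  have hzero : ∀ a ∈ B ⊔ C, ∀ d, d ∈ B → d ∈ C → Φ a d = 0 := by
    intro a ha d hdB hdC
    obtain ⟨b, hb, c, hc, rfl⟩ := Submodule.mem_sup.mp ha
    rw [map_add, LinearMap.add_apply, hB b hb d hdB, hC c hc d hdC, add_zero]
  have hWA : ∀ x : ↥W, (x : V) ∈ A := fun x => x.2.1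
  have hWBC : ∀ x : ↥W, (x : V) ∈ B ⊔ C := fun x => x.2.2
  -- F vanishes when the right argument is in N
  have hFright : ∀ y ∈ N, ∀ x : ↥W, F x y = 0 := by
    intro y hy x
    obtain ⟨p, hp, q, hq, hpq⟩ := Submodule.mem_sup.mp hy
    have hpq' : p + q = (y : V) := hpq
    have hπy := hπ y (hWBC y)
    -- π y - p ∈ B ⊓ C
    have h1 : π y - p ∈ B := Submodule.sub_mem _ hπy.1 hp.2
    have h2 : π y - p ∈ C := by
      have : π (y : V) - p = q - ((y : V) - π y) := by rw [← hpq']; abel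
      rw [this]; exact Submodule.sub_mem _ hq.2 hπy.2
    have : Φ (x : V) (π (y : V)) = Φ x p + Φ x (π (y : V) - p) := by rw [← map_add]; congr 1; abel
    rw [hFapply, this, hA x (hWA x) p hp.1,
      hzero x (hWBC x) _ h1 h2, add_zero, neg_zero]
  -- F vanishes when the left argument is in N
  have hFleft : ∀ x ∈ N, ∀ y : ↥W, F x y = 0 := by
    intro x hx y
    obtain ⟨p, hp, q, hq, hpq⟩ := Submodule.mem_sup.mp hx
    have hpq' : p + q = (x : V) := hpq
    have hπy := hπ y (hWBC y)
    have h1 : Φ p (π y) = 0 := hB p hp.2 _ hπy.1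
    have h2 : Φ q (π y) = 0 := by
      have : Φ q (π y) = Φ q y - Φ q ((y : V) - π y) := by
        rw [← LinearMap.map_sub]; congr 1; abel
      rw [this, hA q hq.1 y (hWA y), hC q hq.2 _ hπy.2, sub_zero]
    have : Φ (x : V) (π y) = 0 := by
      rw [← hpq', map_add, LinearMap.add_apply, h1, h2, add_zero]
    rw [hFapply, this, neg_zero]
  -- descend to the quotient in both variables
  have hker1 : N ≤ LinearMap.ker F.flip := by
    intro y hy
    rw [LinearMap.mem_ker]
    ext x
    exact hFright y hy x
  set G := N.liftQ F.flip hker1 with hGdef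
  have hker2 : N ≤ LinearMap.ker G.flip := by
    intro x hx
    rw [LinearMap.mem_ker]
    apply LinearMap.ext
    intro yq
    induction yq using Submodule.Quotient.induction_on with
    | H y =>
      show G (Submodule.Quotient.mk y) x = 0
      rw [hGdef, Submodule.liftQ_apply]
      exact hFleft x hx y
  refine ⟨N.liftQ G.flip hker2, ?_⟩
  intro a a' b b' c c' haA ha'A hbB hb'B hcC hc'C hab ha'b hma hma'
  have h1 : (N.liftQ G.flip hker2) (Submodule.Quotient.mk ⟨a, hma⟩)
      (Submodule.Quotient.mk ⟨a', hma'⟩) = F ⟨a, hma⟩ ⟨a', hma'⟩ := by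
    rw [Submodule.liftQ_apply]
    show G (Submodule.Quotient.mk ⟨a', hma'⟩) ⟨a, hma⟩ = _
    rw [hGdef, Submodule.liftQ_apply]
    rfl
  rw [h1, hFapply]
  -- now show -Φ a (π a') = Φ a b'
  have hπa' := hπ a' hma'.2
  have h2 : π a' + b' ∈ B := Submodule.add_mem _ hπa'.1 hb'B
  have h3 : π a' + b' ∈ C := by
    have : π a' + b' = -(a' - π a') - c' := by rw [ha'b]; abel
    rw [this]
    exact Submodule.sub_mem _ (Submodule.neg_mem _ hπa'.2) hc'C
  have h4 : Φ a (π a' + b') = 0 := hzero a hma.2 _ h2 h3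
  rw [map_add] at h4
  linarith
end

section
/- With V, Φ, A, B, C and W = (A ∩ (B + C)) / (A ∩ B + A ∩ C) as above, if Φ is skew-symmetric then the induced Wall form Ψ on W (defined by Ψ([a],[a']) = Φ(a,b') where a' = -b' - c', b' ∈ B, c' ∈ C) is a symmetric bilinear form. -/
/-- If Φ is skew-symmetric, then Wall's induced pairing
Ψ([a],[a']) = Φ(a,b') (where a' = -b' - c', b' ∈ B, c' ∈ C) is symmetric:
at the level of representatives, Φ(a,b') = Φ(a',b). -/
theorem wall_pairing_symmetric {V : Type} [AddCommGroup V] [Module ℚ V]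
    [FiniteDimensional ℚ V]
    (Φ : V →ₗ[ℚ] V →ₗ[ℚ] ℚ)
    (hskew : ∀ x y, Φ x y = -(Φ y x))
    (A B C : Submodule ℚ V)
    (hA : ∀ x ∈ A, ∀ y ∈ A, Φ x y = 0)
    (hB : ∀ x ∈ B, ∀ y ∈ B, Φ x y = 0)
    (hC : ∀ x ∈ C, ∀ y ∈ C, Φ x y = 0)
    (a a' b b' c c' : V)
    (ha : a ∈ A) (ha' : a' ∈ A) (hb : b ∈ B) (hb' : b' ∈ B) (hc : c ∈ C) (hc' : c' ∈ C)
    (h1 : a = -b - c) (h2 : a' = -b' - c') :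
    Φ a b' = Φ a' b := by
  have haa : Φ a a' = 0 := hA a ha a' ha'
  have hbb : Φ b b' = 0 := hB b hb b' hb'
  have hcc : Φ c c' = 0 := hC c hc c' hc'
  have hb'b : Φ b' b = 0 := hB b' hb' b hb
  have key : Φ b c' + Φ c b' = 0 := by
    have := haa
    rw [h1, h2] at this
    simp only [map_sub, map_neg, LinearMap.sub_apply, LinearMap.neg_apply,
      map_add, LinearMap.add_apply] at this
    rw [hbb, hcc] at this
    linarith
  rw [h1, h2]
  simp only [map_sub, map_neg, LinearMap.sub_apply, LinearMap.neg_apply]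
  rw [hbb, hb'b, hskew c' b]
  linarith
end

section
/- Let V be a finite-dimensional ℚ-vector space with bilinear Φ vanishing identically on subspaces A, B, C. Then the natural map sending a class of a ∈ A ∩ (B+C) with a = -b - c to the class of b ∈ B ∩ (C+A) induces a well-defined linear isomorphism (A ∩ (B + C))/(A ∩ B + A ∩ C) ≅ (B ∩ (C + A))/(B ∩ C + B ∩ A). -/
namespace WallAux

variable {V : Type} [AddCommGroup V] [Module ℚ V]

/-- The quotient appearing in the statement. -/
abbrev WQ (A B C : Submodule ℚ V) :=
  ↥(A ⊓ (B ⊔ C)) ⧸ (Submodule.comap (A ⊓ (B ⊔ C)).subtype (A ⊓ B ⊔ A ⊓ C))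

lemma mk_eq_of_sub_mem (A B C : Submodule ℚ V) {w w' : V}
    (hw : w ∈ B ⊓ (C ⊔ A)) (hw' : w' ∈ B ⊓ (C ⊔ A)) (h : w - w' ∈ C) :
    (Submodule.Quotient.mk ⟨w, hw⟩ : WQ B C A) = Submodule.Quotient.mk ⟨w', hw'⟩ := by
  rw [Submodule.Quotient.eq]
  have : w - w' ∈ B ⊓ C := ⟨sub_mem hw.1 hw'.1, h⟩
  exact Submodule.mem_sup_left this

lemma exists_bpart (A B C : Submodule ℚ V) (x : ↥(A ⊓ (B ⊔ C))) :
    ∃ w : ↥(B ⊓ (C ⊔ A)), (x : V) - (w : V) ∈ C := by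
  obtain ⟨b0, hb0, c0, hc0, hsum⟩ := Submodule.mem_sup.mp x.2.2
  have hw : b0 ∈ C ⊔ A :=
    Submodule.mem_sup.mpr ⟨-c0, neg_mem hc0, x.1, x.2.1, by rw [← hsum]; abel⟩
  refine ⟨⟨b0, hb0, hw⟩, ?_⟩
  have h : (x : V) - b0 = c0 := by rw [← hsum]; abel
  rw [h]
  exact hc0

/-- A choice of `B`-component of `x : A ⊓ (B ⊔ C)`, as an element of `B ⊓ (C ⊔ A)`. -/
noncomputable def bpart (A B C : Submodule ℚ V) (x : ↥(A ⊓ (B ⊔ C))) : ↥(B ⊓ (C ⊔ A)) :=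
  (exists_bpart A B C x).choose

lemma bpart_sub (A B C : Submodule ℚ V) (x : ↥(A ⊓ (B ⊔ C))) :
    (x : V) - (bpart A B C x : V) ∈ C :=
  (exists_bpart A B C x).choose_spec

noncomputable def preMap (A B C : Submodule ℚ V) : ↥(A ⊓ (B ⊔ C)) →ₗ[ℚ] WQ B C A where
  toFun x := - Submodule.Quotient.mk (bpart A B C x)
  map_add' x y := by
    show - Submodule.Quotient.mk (bpart A B C (x + y))
      = - Submodule.Quotient.mk (bpart A B C x) + - Submodule.Quotient.mk (bpart A B C y)
    have key : (bpart A B C (x + y) : V) - ((bpart A B C x : V) + (bpart A B C y : V)) ∈ C := by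
      have h := C.sub_mem (C.add_mem (bpart_sub A B C x) (bpart_sub A B C y))
        (bpart_sub A B C (x + y))
      have e : ((x : V) - (bpart A B C x : V)) + ((y : V) - (bpart A B C y : V))
          - (((x + y : ↥(A ⊓ (B ⊔ C))) : V) - (bpart A B C (x + y) : V))
          = (bpart A B C (x + y) : V) - ((bpart A B C x : V) + (bpart A B C y : V)) := by
        push_cast
        abel
      rwa [e] at h
    have h2 : (Submodule.Quotient.mk (bpart A B C (x + y)) : WQ B C A)
        = Submodule.Quotient.mk (bpart A B C x + bpart A B C y) := by
      have hb : ((bpart A B C x + bpart A B C y : ↥(B ⊓ (C ⊔ A))) : V) ∈ B ⊓ (C ⊔ A) :=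
        (bpart A B C x + bpart A B C y).2
      have := mk_eq_of_sub_mem A B C (bpart A B C (x + y)).2 hb (by push_cast; exact key)
      exact this
    rw [h2, Submodule.Quotient.mk_add]
    abel
  map_smul' q x := by
    show - Submodule.Quotient.mk (bpart A B C (q • x))
      = (RingHom.id ℚ) q • (- Submodule.Quotient.mk (bpart A B C x))
    have key : (bpart A B C (q • x) : V) - q • (bpart A B C x : V) ∈ C := by
      have h := C.sub_mem (C.smul_mem q (bpart_sub A B C x)) (bpart_sub A B C (q • x))
      have e : q • ((x : V) - (bpart A B C x : V))
          - (((q • x : ↥(A ⊓ (B ⊔ C))) : V) - (bpart A B C (q • x) : V))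
          = (bpart A B C (q • x) : V) - q • (bpart A B C x : V) := by
        push_cast
        rw [smul_sub]
        abel
      rwa [e] at h
    have h2 : (Submodule.Quotient.mk (bpart A B C (q • x)) : WQ B C A)
        = Submodule.Quotient.mk (q • bpart A B C x) := by
      have hb : ((q • bpart A B C x : ↥(B ⊓ (C ⊔ A))) : V) ∈ B ⊓ (C ⊔ A) :=
        (q • bpart A B C x).2
      have := mk_eq_of_sub_mem A B C (bpart A B C (q • x)).2 hb (by push_cast; exact key)
      exact this
    rw [h2, Submodule.Quotient.mk_smul, RingHom.id_apply, smul_neg]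

lemma preMap_ker (A B C : Submodule ℚ V) :
    Submodule.comap (A ⊓ (B ⊔ C)).subtype (A ⊓ B ⊔ A ⊓ C) ≤ LinearMap.ker (preMap A B C) := by
  intro x hx
  have hx' : (x : V) ∈ A ⊓ B ⊔ A ⊓ C := hx
  obtain ⟨u, hu, v, hv, huv⟩ := Submodule.mem_sup.mp hx'
  have hbc : (bpart A B C x : V) - u ∈ B ⊓ C := by
    refine ⟨sub_mem (bpart A B C x).2.1 hu.2, ?_⟩
    have h1 : (x : V) - (bpart A B C x : V) ∈ C := bpart_sub A B C x
    have h2 : (bpart A B C x : V) - u = v - ((x : V) - (bpart A B C x : V)) := by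
      rw [← huv]; abel
    rw [h2]
    exact sub_mem hv.2 h1
  have hmem : (bpart A B C x : V) ∈ B ⊓ C ⊔ B ⊓ A := by
    have h3 : (bpart A B C x : V) = ((bpart A B C x : V) - u) + u := by abel
    rw [h3]
    exact add_mem (Submodule.mem_sup_left hbc) (Submodule.mem_sup_right ⟨hu.2, hu.1⟩)
  have h4 : (preMap A B C) x = - Submodule.Quotient.mk (bpart A B C x) := rfl
  rw [LinearMap.mem_ker, h4, neg_eq_zero, Submodule.Quotient.mk_eq_zero]
  exact hmem

noncomputable def auxMap (A B C : Submodule ℚ V) : WQ A B C →ₗ[ℚ] WQ B C A :=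
  Submodule.liftQ _ (preMap A B C) (preMap_ker A B C)

lemma auxMap_mk (A B C : Submodule ℚ V) (a b c : V) (_ : a ∈ A) (hb : b ∈ B) (hc : c ∈ C)
    (habc : a = -b - c) (hma : a ∈ A ⊓ (B ⊔ C)) (hmb : b ∈ B ⊓ (C ⊔ A)) :
    auxMap A B C (Submodule.Quotient.mk ⟨a, hma⟩) = Submodule.Quotient.mk ⟨b, hmb⟩ := by
  have h1 : auxMap A B C (Submodule.Quotient.mk ⟨a, hma⟩)
      = - Submodule.Quotient.mk (bpart A B C ⟨a, hma⟩) := rfl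
  have hnb : -b ∈ B ⊓ (C ⊔ A) := neg_mem hmb
  have hsub : (bpart A B C ⟨a, hma⟩ : V) - (-b) ∈ C := by
    have h2 : (a : V) - (bpart A B C ⟨a, hma⟩ : V) ∈ C := bpart_sub A B C ⟨a, hma⟩
    have e : (bpart A B C ⟨a, hma⟩ : V) - (-b) = -c - (a - (bpart A B C ⟨a, hma⟩ : V)) := by
      generalize (bpart A B C ⟨a, hma⟩ : V) = w
      rw [habc]; abel
    rw [e]
    exact sub_mem (neg_mem hc) h2
  have h3 := mk_eq_of_sub_mem A B C (bpart A B C ⟨a, hma⟩).2 hnb hsub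
  have h4 : (Submodule.Quotient.mk (bpart A B C ⟨a, hma⟩) : WQ B C A)
      = Submodule.Quotient.mk ⟨-b, hnb⟩ := by simpa using h3
  have h5 : (⟨-b, hnb⟩ : ↥(B ⊓ (C ⊔ A))) = -⟨b, hmb⟩ := rfl
  rw [h1, h4, h5, Submodule.Quotient.mk_neg, neg_neg]

lemma tripleId (A B C : Submodule ℚ V) (x : WQ A B C) :
    auxMap C A B (auxMap B C A (auxMap A B C x)) = x := by
  obtain ⟨y, rfl⟩ := Submodule.Quotient.mk_surjective _ x
  obtain ⟨a, hma⟩ := y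
  obtain ⟨b0, hb0, c0, hc0, hsum⟩ := Submodule.mem_sup.mp hma.2
  have hb : -b0 ∈ B ⊓ (C ⊔ A) :=
    ⟨neg_mem hb0, Submodule.mem_sup.mpr ⟨c0, hc0, -a, neg_mem hma.1, by rw [← hsum]; abel⟩⟩
  have hc : -c0 ∈ C ⊓ (A ⊔ B) :=
    ⟨neg_mem hc0, Submodule.mem_sup.mpr ⟨-a, neg_mem hma.1, b0, hb0, by rw [← hsum]; abel⟩⟩
  have e1 : auxMap A B C (Submodule.Quotient.mk ⟨a, hma⟩) = Submodule.Quotient.mk ⟨-b0, hb⟩ :=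
    auxMap_mk A B C a (-b0) (-c0) hma.1 (neg_mem hb0) (neg_mem hc0) (by rw [← hsum]; abel) hma hb
  have e2 : auxMap B C A (Submodule.Quotient.mk ⟨-b0, hb⟩) = Submodule.Quotient.mk ⟨-c0, hc⟩ :=
    auxMap_mk B C A (-b0) (-c0) a hb.1 (neg_mem hc0) hma.1 (by rw [← hsum]; abel) hb hc
  have e3 : auxMap C A B (Submodule.Quotient.mk ⟨-c0, hc⟩) = Submodule.Quotient.mk ⟨a, hma⟩ :=
    auxMap_mk C A B (-c0) a (-b0) hc.1 hma.1 (neg_mem hb0) (by rw [← hsum]; abel) hc hma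
  rw [e1, e2, e3]

end WallAux

/-- The map sending the class of a ∈ A ∩ (B+C), a = -b - c with b ∈ B, c ∈ C,
to the class of b, induces a well-defined linear isomorphism
(A ∩ (B + C))/(A ∩ B + A ∩ C) ≅ (B ∩ (C + A))/(B ∩ C + B ∩ A). -/
theorem wall_quotient_iso {V : Type} [AddCommGroup V] [Module ℚ V] [FiniteDimensional ℚ V]
    (A B C : Submodule ℚ V) :
    ∃ e : (↥(A ⊓ (B ⊔ C)) ⧸ (Submodule.comap (A ⊓ (B ⊔ C)).subtype (A ⊓ B ⊔ A ⊓ C)))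
        ≃ₗ[ℚ] (↥(B ⊓ (C ⊔ A)) ⧸ (Submodule.comap (B ⊓ (C ⊔ A)).subtype (B ⊓ C ⊔ B ⊓ A))),
      ∀ (a b c : V) (_ : a ∈ A) (_ : b ∈ B) (_ : c ∈ C) (_ : a = -b - c)
        (hma : a ∈ A ⊓ (B ⊔ C)) (hmb : b ∈ B ⊓ (C ⊔ A)),
        e (Submodule.Quotient.mk ⟨a, hma⟩) = Submodule.Quotient.mk ⟨b, hmb⟩ := by
  refine ⟨LinearEquiv.ofLinear (WallAux.auxMap A B C)
    ((WallAux.auxMap C A B).comp (WallAux.auxMap B C A)) ?_ ?_, ?_⟩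
  · ext x
    simpa using WallAux.tripleId B C A (Submodule.Quotient.mk x)
  · ext x
    simpa using WallAux.tripleId A B C (Submodule.Quotient.mk x)
  · intro a b c ha hb hc habc hma hmb
    exact WallAux.auxMap_mk A B C a b c ha hb hc habc hma hmb
end

section
/- Let (K, ⟨·,·⟩) be a finite-dimensional real vector space with a nondegenerate symmetric bilinear form, S ⊆ K a subspace with S ⊆ S^⊥, L a complement of S in S^⊥, and M a complement of S^⊥ in K. Then the signature of the form on K equals the signature of its restriction to L. -/
open LinearMap (BilinForm)

/-- The dimension of a maximal positive definite subspace for a bilinear form. -/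
noncomputable def posIndex {V : Type} [AddCommGroup V] [Module ℝ V]
    (Φ : BilinForm ℝ V) : ℕ :=
  sSup {n | ∃ U : Submodule ℝ V, Module.finrank ℝ U = n ∧ ∀ v ∈ U, v ≠ 0 → 0 < Φ v v}

/-- The signature of a bilinear form. -/
noncomputable def signature {V : Type} [AddCommGroup V] [Module ℝ V]
    (Φ : BilinForm ℝ V) : ℤ :=
  (posIndex Φ : ℤ) - (posIndex (-Φ) : ℤ)

section Aux

open Module Submodule

variable {V : Type} [AddCommGroup V] [Module ℝ V]

lemma aux_sum_sum (Φ : BilinForm ℝ V) {ι : Type} [Fintype ι] {v : ι → V}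
    (horth : ∀ i j, i ≠ j → Φ (v i) (v j) = 0) (c : ι → ℝ) :
    Φ (∑ i, c i • v i) (∑ i, c i • v i) = ∑ i, c i * c i * Φ (v i) (v i) := by
  have step1 : ∀ x, Φ x (∑ j, c j • v j) = ∑ j, c j * Φ x (v j) := by
    intro x
    rw [map_sum]
    exact Finset.sum_congr rfl fun j _ => by rw [map_smul, smul_eq_mul]
  have step2 : ∀ y, Φ (∑ i, c i • v i) y = ∑ i, c i * Φ (v i) y := by
    intro y
    rw [map_sum, LinearMap.sum_apply]
    exact Finset.sum_congr rfl fun i _ => by rw [map_smul, LinearMap.smul_apply, smul_eq_mul]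
  calc Φ (∑ i, c i • v i) (∑ i, c i • v i)
      = ∑ j, c j * Φ (∑ i, c i • v i) (v j) := step1 _
    _ = ∑ j, c j * ∑ i, c i * Φ (v i) (v j) :=
        Finset.sum_congr rfl fun j _ => by rw [step2]
    _ = ∑ j, c j * (c j * Φ (v j) (v j)) := by
        refine Finset.sum_congr rfl fun j _ => ?_
        congr 1
        rw [Finset.sum_eq_single j]
        · intro i _ hij
          rw [horth i j hij]
          ring
        · intro h
          exact absurd (Finset.mem_univ j) h
    _ = ∑ i, c i * c i * Φ (v i) (v i) := Finset.sum_congr rfl fun i _ => by ring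

lemma aux_span_posdef (Φ : BilinForm ℝ V) {ι : Type} [Fintype ι] {v : ι → V}
    (horth : ∀ i j, i ≠ j → Φ (v i) (v j) = 0) (hpos : ∀ i, 0 < Φ (v i) (v i)) :
    ∀ x ∈ Submodule.span ℝ (Set.range v), x ≠ 0 → 0 < Φ x x := by
  intro x hx hx0
  obtain ⟨c, rfl⟩ := (mem_span_range_iff_exists_fun ℝ).mp hx
  rw [aux_sum_sum Φ horth]
  obtain ⟨i, hi⟩ : ∃ i, c i ≠ 0 := by
    by_contra h
    push_neg at h
    exact hx0 (by simp [h])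
  refine Finset.sum_pos' (fun j _ => mul_nonneg (mul_self_nonneg _) (hpos j).le)
    ⟨i, Finset.mem_univ i, mul_pos (mul_self_pos.mpr hi) (hpos i)⟩

lemma aux_span_negsemidef (Φ : BilinForm ℝ V) {ι : Type} [Fintype ι] {v : ι → V}
    (horth : ∀ i j, i ≠ j → Φ (v i) (v j) = 0) (hneg : ∀ i, Φ (v i) (v i) ≤ 0) :
    ∀ x ∈ Submodule.span ℝ (Set.range v), Φ x x ≤ 0 := by
  intro x hx
  obtain ⟨c, rfl⟩ := (mem_span_range_iff_exists_fun ℝ).mp hx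
  rw [aux_sum_sum Φ horth]
  refine Finset.sum_nonpos fun j _ => ?_
  have := mul_self_nonneg (c j)
  nlinarith [hneg j]

variable [FiniteDimensional ℝ V]

lemma aux_posIndex_bdd (Φ : BilinForm ℝ V) :
    BddAbove {n | ∃ U : Submodule ℝ V, Module.finrank ℝ U = n ∧ ∀ v ∈ U, v ≠ 0 → 0 < Φ v v} :=
  ⟨Module.finrank ℝ V, by rintro n ⟨U, rfl, _⟩; exact U.finrank_le⟩

lemma aux_le_posIndex (Φ : BilinForm ℝ V) {U : Submodule ℝ V}
    (hU : ∀ v ∈ U, v ≠ 0 → 0 < Φ v v) :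
    Module.finrank ℝ U ≤ posIndex Φ :=
  le_csSup (aux_posIndex_bdd Φ) ⟨U, rfl, hU⟩

lemma aux_posIndex_le (Φ : BilinForm ℝ V) {N : Submodule ℝ V}
    (hN : ∀ v ∈ N, Φ v v ≤ 0) :
    posIndex Φ + Module.finrank ℝ N ≤ Module.finrank ℝ V := by
  have hNle : Module.finrank ℝ N ≤ Module.finrank ℝ V := N.finrank_le
  have hb : posIndex Φ ≤ Module.finrank ℝ V - Module.finrank ℝ N := by
    refine csSup_le ⟨0, ⊥, finrank_bot ℝ V, fun v hv h0 =>
      (h0 ((Submodule.mem_bot ℝ).mp hv)).elim⟩ ?_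
    rintro n ⟨U, rfl, hU⟩
    have hdisj : U ⊓ N = ⊥ := by
      rw [eq_bot_iff]
      rintro x ⟨hxU, hxN⟩
      rw [Submodule.mem_bot]
      by_contra h0
      exact absurd (hN x hxN) (not_le.mpr (hU x hxU h0))
    have hkey := Submodule.finrank_sup_add_finrank_inf_eq U N
    rw [hdisj, finrank_bot] at hkey
    have h2 : Module.finrank ℝ ↥(U ⊔ N) ≤ Module.finrank ℝ V := Submodule.finrank_le _
    omega
  omega

lemma aux_finrank_span_subtype {m : ℕ} {u : Fin m → V} (hli : LinearIndependent ℝ u)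
    (I : Finset (Fin m)) :
    Module.finrank ℝ (Submodule.span ℝ (Set.range fun i : ↥I => u i)) = I.card := by
  have h := finrank_span_eq_card (R := ℝ)
    (hli.comp (Subtype.val : ↥I → Fin m) Subtype.val_injective)
  rw [Fintype.card_coe] at h
  exact h

end Aux

/-- For a nondegenerate symmetric bilinear form on a finite-dimensional real
vector space with S totally isotropic, S^⊥ = L ⊕ S and K = S^⊥ ⊕ M, the signature of the
form on K equals the signature of its restriction to L. -/
theorem signature_eq_signature_restrict_complement
    {K : Type} [AddCommGroup K] [Module ℝ K] [FiniteDimensional ℝ K]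
    (Φ : BilinForm ℝ K)
    (hsymm : ∀ x y, Φ x y = Φ y x)
    (hnd : Φ.Nondegenerate)
    (S L M : Submodule ℝ K)
    (hS : S ≤ Φ.orthogonal S)
    (hLsup : L ⊔ S = Φ.orthogonal S)
    (hLinf : L ⊓ S = ⊥)
    (hMsup : Φ.orthogonal S ⊔ M = ⊤)
    (hMinf : Φ.orthogonal S ⊓ M = ⊥) :
    signature Φ = signature (Φ.restrict L) := by
  classical
  haveI : Invertible (2 : ℝ) := invertibleOfNonzero two_ne_zero
  set n := Module.finrank ℝ K with hn
  set d := Module.finrank ℝ S with hd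
  set r := Module.finrank ℝ L with hr
  have hrefl : Φ.IsRefl := fun x y h => by rw [hsymm]; exact h
  have hsymm' : Φ.IsSymm := LinearMap.BilinForm.isSymm_def.mpr fun x y => hsymm x y
  have hL_le : L ≤ Φ.orthogonal S := le_trans le_sup_left hLsup.le
  -- dimension count
  have hdim1 : d + Module.finrank ℝ (Φ.orthogonal S) = n := by
    have := LinearMap.BilinForm.finrank_add_finrank_orthogonal hrefl (B := Φ) S
    rw [LinearMap.BilinForm.orthogonal_top_eq_bot hnd, inf_bot_eq, finrank_bot, add_zero] at this
    exact this
  have hdim2 : r + d = Module.finrank ℝ (Φ.orthogonal S) := by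
    have := Submodule.finrank_sup_add_finrank_inf_eq L S
    rw [hLsup, hLinf, finrank_bot, add_zero] at this
    omega
  -- nondegeneracy of the restriction to L
  have hndL : (Φ.restrict L).Nondegenerate := by
    refine LinearMap.BilinForm.Nondegenerate.ofSeparatingLeft ?_
    intro x hx
    have hxS : (x : K) ∈ S := by
      have hmem : (x : K) ∈ Φ.orthogonal (Φ.orthogonal S) := by
        rw [LinearMap.BilinForm.mem_orthogonal_iff]
        intro w hw
        rw [← hLsup] at hw
        obtain ⟨l, hl, s, hs, rfl⟩ := Submodule.mem_sup.mp hw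
        have h1 : Φ l (x : K) = 0 := by
          rw [hsymm]
          exact hx ⟨l, hl⟩
        have h2 : Φ s (x : K) = 0 := hL_le x.2 s hs
        show Φ (l + s) (x : K) = 0
        rw [map_add, LinearMap.add_apply, h1, h2, add_zero]
      rwa [LinearMap.BilinForm.orthogonal_orthogonal hnd hrefl S] at hmem
    have : (x : K) ∈ L ⊓ S := ⟨x.2, hxS⟩
    rw [hLinf, Submodule.mem_bot] at this
    exact Subtype.ext this
  -- orthogonal basis of L
  obtain ⟨b, hb⟩ := LinearMap.BilinForm.exists_orthogonal_basis
    (B := Φ.restrict L) (LinearMap.isSymm_def.mpr fun x y => hsymm x y)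
  have hbnz : ∀ i, Φ.restrict L (b i) (b i) ≠ 0 := fun i =>
    LinearMap.BilinForm.iIsOrtho.not_isOrtho_basis_self_of_nondegenerate hb hndL i
  set Ip : Finset (Fin r) := Finset.univ.filter (fun i => 0 < Φ.restrict L (b i) (b i)) with hIp
  set In : Finset (Fin r) := Ipᶜ with hIn
  have hIpPos : ∀ i : ↥Ip, 0 < Φ.restrict L (b i) (b i) := fun i =>
    (Finset.mem_filter.mp i.2).2
  have hInNeg : ∀ i : ↥In, Φ.restrict L (b i) (b i) < 0 := by
    rintro ⟨i, hi⟩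
    have : ¬ (0 < Φ.restrict L (b i) (b i)) := by
      intro h
      exact (Finset.mem_compl.mp hi) (Finset.mem_filter.mpr ⟨Finset.mem_univ i, h⟩)
    exact lt_of_le_of_ne (not_lt.mp this) (hbnz i)
  set p := Ip.card with hp
  set q := In.card with hq
  have hpq : p + q = r := by
    have := Finset.card_add_card_compl Ip
    rw [Fintype.card_fin] at this
    exact this
  -- orthogonality within subfamilies
  have horthL : ∀ (I : Finset (Fin r)) (i j : ↥I), i ≠ j →
      Φ.restrict L (b i) (b j) = 0 := fun I i j hij =>
    hb (fun h => hij (Subtype.ext h))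
  -- posIndex of restriction to L
  have hPL_ge : p ≤ posIndex (Φ.restrict L) := by
    have h := aux_le_posIndex (Φ.restrict L)
      (U := Submodule.span ℝ (Set.range fun i : ↥Ip => b i))
      (aux_span_posdef _ (horthL Ip) hIpPos)
    rwa [aux_finrank_span_subtype b.linearIndependent Ip] at h
  have hPL_le : posIndex (Φ.restrict L) + q ≤ r := by
    have h := aux_posIndex_le (Φ.restrict L)
      (N := Submodule.span ℝ (Set.range fun i : ↥In => b i))
      (aux_span_negsemidef _ (horthL In) (fun i => (hInNeg i).le))
    rw [aux_finrank_span_subtype b.linearIndependent In] at h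
    omega
  have hNL_ge : q ≤ posIndex (-(Φ.restrict L)) := by
    have h := aux_le_posIndex (-(Φ.restrict L))
      (U := Submodule.span ℝ (Set.range fun i : ↥In => b i))
      (aux_span_posdef _ (fun i j hij => by
          simp only [LinearMap.neg_apply]
          rw [horthL In i j hij, neg_zero])
        (fun i => by
          simp only [LinearMap.neg_apply]
          exact neg_pos.mpr (hInNeg i)))
    rwa [aux_finrank_span_subtype b.linearIndependent In] at h
  have hNL_le : posIndex (-(Φ.restrict L)) + p ≤ r := by
    have h := aux_posIndex_le (-(Φ.restrict L))
      (N := Submodule.span ℝ (Set.range fun i : ↥Ip => b i))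
      (aux_span_negsemidef _ (fun i j hij => by
          simp only [LinearMap.neg_apply]
          rw [horthL Ip i j hij, neg_zero])
        (fun i => by
          simp only [LinearMap.neg_apply]
          exact neg_nonpos.mpr (hIpPos i).le))
    rw [aux_finrank_span_subtype b.linearIndependent Ip] at h
    omega
  -- the images of the basis vectors in K
  have hbK_li : LinearIndependent ℝ (fun i => (b i : K)) :=
    b.linearIndependent.map' L.subtype L.ker_subtype
  have hbK_mem : ∀ i, (b i : K) ∈ L := fun i => (b i).2
  have hbK_restrict : ∀ i j, Φ (b i : K) (b j : K) = Φ.restrict L (b i) (b j) := by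
    intro i j; rfl
  have hbK_orth : ∀ (I : Finset (Fin r)) (i j : ↥I), i ≠ j →
      Φ (b i : K) (b j : K) = 0 := fun I i j hij => by
    rw [hbK_restrict]
    exact hb (fun h => hij (Subtype.ext h))
  -- squares on (span ∪ S) reduce to squares on the span
  have hspan_le : ∀ I : Finset (Fin r),
      Submodule.span ℝ (Set.range fun i : ↥I => (b i : K)) ≤ L := by
    intro I
    rw [Submodule.span_le]
    rintro _ ⟨i, rfl⟩
    exact hbK_mem i
  have hsup_eq : ∀ (I : Finset (Fin r)),
      ∀ x ∈ (Submodule.span ℝ (Set.range fun i : ↥I => (b i : K))) ⊔ S,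
      ∃ a ∈ Submodule.span ℝ (Set.range fun i : ↥I => (b i : K)), Φ x x = Φ a a := by
    intro I x hx
    obtain ⟨a, ha, s, hs, rfl⟩ := Submodule.mem_sup.mp hx
    refine ⟨a, ha, ?_⟩
    have h2 : Φ s a = 0 := hL_le (hspan_le I ha) s hs
    have h3 : Φ a s = 0 := by rw [hsymm]; exact h2
    have h4 : Φ s s = 0 := hS hs s hs
    simp only [map_add, LinearMap.add_apply, h2, h3, h4, add_zero, zero_add]
  have hsup_rank : ∀ I : Finset (Fin r),
      Module.finrank ℝ ↥((Submodule.span ℝ (Set.range fun i : ↥I => (b i : K))) ⊔ S)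
        = I.card + d := by
    intro I
    have hinf : (Submodule.span ℝ (Set.range fun i : ↥I => (b i : K))) ⊓ S = ⊥ := by
      rw [eq_bot_iff, ← hLinf]
      exact inf_le_inf_right S (hspan_le I)
    have := Submodule.finrank_sup_add_finrank_inf_eq
      (Submodule.span ℝ (Set.range fun i : ↥I => (b i : K))) S
    rw [hinf, finrank_bot, add_zero, aux_finrank_span_subtype hbK_li I] at this
    omega
  -- upper bound for posIndex Φ
  have hK_le : posIndex Φ + (q + d) ≤ n := by
    have h := aux_posIndex_le Φ
      (N := (Submodule.span ℝ (Set.range fun i : ↥In => (b i : K))) ⊔ S)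
      (fun x hx => by
        obtain ⟨a, ha, he⟩ := hsup_eq In x hx
        rw [he]
        exact aux_span_negsemidef Φ (hbK_orth In)
          (fun i => by rw [hbK_restrict]; exact (hInNeg i).le) a ha)
    rw [hsup_rank In] at h
    omega
  -- upper bound for posIndex (-Φ)
  have hK_le' : posIndex (-Φ) + (p + d) ≤ n := by
    have h := aux_posIndex_le (-Φ)
      (N := (Submodule.span ℝ (Set.range fun i : ↥Ip => (b i : K))) ⊔ S)
      (fun x hx => by
        obtain ⟨a, ha, he⟩ := hsup_eq Ip x hx
        simp only [LinearMap.neg_apply]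
        rw [he, neg_nonpos]
        by_cases ha0 : a = 0
        · simp [ha0]
        · exact (aux_span_posdef Φ (hbK_orth Ip)
            (fun i => by rw [hbK_restrict]; exact hIpPos i) a ha ha0).le)
    rw [hsup_rank Ip, ← hn] at h
    exact h
  -- lower bound: orthogonal basis of K
  obtain ⟨cb, hcb⟩ := LinearMap.BilinForm.exists_orthogonal_basis (B := Φ) (LinearMap.BilinForm.isSymm_iff.mp hsymm')
  have hcnz : ∀ i, Φ (cb i) (cb i) ≠ 0 := fun i =>
    LinearMap.BilinForm.iIsOrtho.not_isOrtho_basis_self_of_nondegenerate hcb hnd i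
  set Jp : Finset (Fin n) := Finset.univ.filter (fun i => 0 < Φ (cb i) (cb i)) with hJp
  have hJpPos : ∀ i : ↥Jp, 0 < Φ (cb i) (cb i) := fun i => (Finset.mem_filter.mp i.2).2
  have hJnNeg : ∀ i : ↥(Jpᶜ), Φ (cb i) (cb i) < 0 := by
    rintro ⟨i, hi⟩
    have : ¬ (0 < Φ (cb i) (cb i)) := fun h =>
      (Finset.mem_compl.mp hi) (Finset.mem_filter.mpr ⟨Finset.mem_univ i, h⟩)
    exact lt_of_le_of_ne (not_lt.mp this) (hcnz i)
  have horthK : ∀ (I : Finset (Fin n)) (i j : ↥I), i ≠ j → Φ (cb i) (cb j) = 0 :=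
    fun I i j hij => hcb (fun h => hij (Subtype.ext h))
  have hK_ge : Jp.card ≤ posIndex Φ := by
    have h := aux_le_posIndex Φ
      (U := Submodule.span ℝ (Set.range fun i : ↥Jp => cb i))
      (aux_span_posdef _ (horthK Jp) hJpPos)
    rwa [aux_finrank_span_subtype cb.linearIndependent Jp] at h
  have hK_ge' : Jpᶜ.card ≤ posIndex (-Φ) := by
    have h := aux_le_posIndex (-Φ)
      (U := Submodule.span ℝ (Set.range fun i : ↥(Jpᶜ) => cb i))
      (aux_span_posdef _ (fun i j hij => by
          simp only [LinearMap.neg_apply]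
          rw [horthK Jpᶜ i j hij, neg_zero])
        (fun i => by
          simp only [LinearMap.neg_apply]
          exact neg_pos.mpr (hJnNeg i)))
    rwa [aux_finrank_span_subtype cb.linearIndependent Jpᶜ] at h
  have hJsum : Jp.card + Jpᶜ.card = n := by
    have := Finset.card_add_card_compl Jp
    rwa [Fintype.card_fin] at this
  -- finish
  have hPL : posIndex (Φ.restrict L) = p := by omega
  have hNL : posIndex (-(Φ.restrict L)) = q := by omega
  have hPK : posIndex Φ = p + d := by omega
  have hNK : posIndex (-Φ) = q + d := by omega
  rw [signature, signature, hPL, hNL, hPK, hNK]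
  push_cast
  ring
end
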